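/- Let F be a finite field, a primitive in F, n = |F|−1, and 1 ≤ k ≤ n. Let g(x) = ∏_{j=1}^{n−k}(x−a^j). Then g has exactly n−k+1 nonzero coefficients; equivalently, every coefficient g_0, g_1, …, g_{n−k} of g is nonzero. -/

import Mathlib

open Polynomial Finset

private lemma aux_comp_coeff {F : Type*} [Field F] (p : F[X]) (c : F) (j : ℕ) :
    (p.comp (C c * X)).coeff j = c ^ j * p.coeff j := by
  induction p using Polynomial.induction_on' with
  | add p q hp hq => simp [add_comp, hp, hq, mul_add]
  | monomial t b =>
      rw [monomial_comp, mul_pow, ← C_pow, ← mul_assoc, ← map_mul, coeff_C_mul_X_pow,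
        coeff_monomial]
      by_cases hjt : j = t
      · subst hjt; simp [mul_comm]
      · simp [hjt, Ne.symm hjt]

theorem stmt4 {F : Type*} [Field F] [Fintype F] (a : F) (n k : ℕ)
    (hn : n = Fintype.card F - 1) (ha : IsPrimitiveRoot a n)
    (hk : 1 ≤ k) (hkn : k ≤ n) :
    ∀ i ≤ n - k,
      (∏ j ∈ Finset.Icc 1 (n - k), (Polynomial.X - Polynomial.C (a ^ j))).coeff i ≠ 0 := by
  set m := n - k with hm
  have hn1 : 1 ≤ n := le_trans hk hkn
  have hmn : m ≤ n - 1 := by omega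
  have ha0 : a ≠ 0 := ha.ne_zero (by omega)
  have hA : ∀ j, 0 < j → j ≤ n - 1 → a ^ j ≠ 1 := fun j h1 h2 =>
    ha.pow_ne_one_of_pos_of_lt h1.ne' (by omega)
  set g : F[X] := ∏ i ∈ Finset.range m, (X - C (a ^ (i + 1))) with hgdef
  have hIcc : (∏ j ∈ Finset.Icc 1 m, (X - C (a ^ j))) = g := by
    rw [hgdef, ← Finset.Ico_add_one_right_eq_Icc, Finset.prod_Ico_eq_prod_range]
    simp [add_comm]
  set h : F[X] := ∏ i ∈ Finset.range m, (X - C (a ^ i)) with hhdef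
  -- functional equation
  have L1 : (X - C (1:F)) * g = (X - C (a ^ m)) * h := by
    have e := (Finset.prod_range_succ' (fun i => X - C (a ^ i)) m).symm.trans
      (Finset.prod_range_succ (fun i => X - C (a ^ i)) m)
    simp only [pow_zero] at e
    rw [mul_comm (X - C (1:F)), mul_comm (X - C (a ^ m))]
    exact e
  have hcomp : g.comp (C a * X) = C (a ^ m) * h := by
    rw [hgdef, Polynomial.prod_comp]
    have e : ∀ i ∈ Finset.range m,
        (X - C (a ^ (i + 1))).comp (C a * X) = C a * (X - C (a ^ i)) := by
      intro i _
      rw [sub_comp, X_comp, C_comp, pow_succ', map_mul]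
      ring
    rw [Finset.prod_congr rfl e, Finset.prod_mul_distrib, Finset.prod_const, card_range,
      map_pow, hhdef]
  have L3 : ∀ j, a ^ m * h.coeff j = a ^ j * g.coeff j := by
    intro j
    have := congrArg (fun p => Polynomial.coeff p j) hcomp
    rw [mul_comm (a ^ j)]
    simpa [aux_comp_coeff, ← map_pow, coeff_C_mul] using this.symm
  -- key coefficient recurrence
  have key : ∀ i, i + 1 ≤ m →
      (a ^ m - a ^ i) * g.coeff i = (a ^ m - a ^ (m + i + 1)) * g.coeff (i + 1) := by
    intro i hi
    have c1 := congrArg (fun p => Polynomial.coeff p (i + 1)) L1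
    simp only [sub_mul, Polynomial.coeff_sub, Polynomial.coeff_X_mul,
      Polynomial.coeff_C_mul] at c1
    have this1 := congrArg (fun x => a ^ m * x) c1
    simp only [mul_sub] at this1
    rw [L3 i] at this1
    have h2 : a ^ m * (a ^ m * h.coeff (i + 1)) = a ^ m * (a ^ (i + 1) * g.coeff (i + 1)) := by
      rw [L3 (i + 1)]
    have expand : a ^ (m + i + 1) = a ^ m * a ^ (i + 1) := by
      rw [← pow_add]; ring_nf
    linear_combination this1 - h2 + g.coeff (i + 1) * expand
  -- leading coefficient
  have hmonic : g.Monic := monic_prod_of_monic _ _ (fun i _ => monic_X_sub_C _)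
  have hdeg : g.natDegree = m := by
    rw [hgdef, Polynomial.natDegree_prod _ _ (fun i _ => X_sub_C_ne_zero _)]
    simp only [natDegree_X_sub_C, Finset.sum_const, card_range, smul_eq_mul, mul_one]
  have top : g.coeff m = 1 := by
    rw [← hdeg]; exact hmonic.coeff_natDegree
  -- downward induction
  have step : ∀ d, d ≤ m → g.coeff (m - d) ≠ 0 := by
    intro d
    induction d with
    | zero => intro _; simpa using top ▸ one_ne_zero
    | succ d ih =>
        intro hdm
        have hprev := ih (by omega)
        set i := m - (d + 1) with hi
        have hi1 : i + 1 = m - d := by omega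
        have hk2 := key i (by omega)
        rw [hi1] at hk2
        intro h0
        rw [h0, mul_zero] at hk2
        have hne : a ^ m - a ^ (m + i + 1) ≠ 0 := by
          have h1 : a ^ (m + i + 1) = a ^ m * a ^ (i + 1) := by rw [← pow_add]; ring_nf
          have hone : a ^ (i + 1) ≠ 1 := hA (i + 1) (by omega) (by omega)
          have hm0 : (a : F) ^ m ≠ 0 := pow_ne_zero m ha0
          intro hc
          apply hone
          have h4 : a ^ m * (1 - a ^ (i + 1)) = 0 := by linear_combination hc + h1
          rcases mul_eq_zero.mp h4 with h5 | h5
          · exact absurd h5 hm0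
          · linear_combination -h5
        exact hne (by
          rcases mul_eq_zero.mp hk2.symm with h | h
          · exact h
          · exact absurd h hprev)
  intro i hi
  rw [hIcc]
  have := step (m - i) (by omega)
  rwa [Nat.sub_sub_self hi] at this
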